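/- Let t be a Lie algebra automorphism of L such that t(h) = h for every diagonal matrix h ∈ L. Then there exist nonzero scalars α, β, γ, δ ∈ K with t(b_{2,1}) = α·b_{2,1}, t(b_{3,2}) = β·b_{3,2}, t(b_{4,3}) = γ·b_{4,3}, t(c_{3,4}) = δ·c_{3,4}, and moreover t(b_{3,1}) = αβ·b_{3,1}, t(b_{4,1}) = αβγ·b_{4,1}, t(b_{4,2}) = βγ·b_{4,2}, t(c_{4,1}) = αβδ·c_{4,1}, t(c_{4,2}) = βδ·c_{4,2}, t(c_{2,1}) = αβ²γδ·c_{2,1}, t(c_{3,1}) = αβγδ·c_{3,1}, t(c_{2,3}) = βγδ·c_{2,3}; furthermore, whenever t(b_{i,j}) = λ·b_{i,j} one has t(b_{j,i}) = λ⁻¹·b_{j,i}, and whenever t(c_{i,j}) = λ·c_{i,j} one has t(d_{i,j}) = λ⁻¹·d_{i,j}. (The maximal torus of Aut(L) fixing the Cartan subalgebra pointwise acts diagonally on the root vectors with the stated eigenvalue pattern.) -/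

import Mathlib

/-- The `8 × 8` matrix `C = [[0, I₄],[I₄, 0]]`: `C i j = 1` iff `|i − j| = 4`. -/
def Cmat (K : Type*) [Field K] : Matrix (Fin 8) (Fin 8) K :=
  Matrix.of fun i j => if i.val + 4 = j.val ∨ j.val + 4 = i.val then 1 else 0

/-- The Lie algebra `L = {x ∈ M₈(K) : xᵀC = −Cx}` of type `D₄`, as a subspace of `M₈(K)`. -/
noncomputable def Lsub (K : Type*) [Field K] : Submodule K (Matrix (Fin 8) (Fin 8) K) where
  carrier := {x | x.transpose * Cmat K = -(Cmat K * x)}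
  add_mem' := by
    intro a b ha hb
    simp only [Set.mem_setOf_eq] at *
    rw [Matrix.transpose_add, Matrix.add_mul, ha, hb, Matrix.mul_add, neg_add]
  zero_mem' := by
    simp only [Set.mem_setOf_eq, Matrix.transpose_zero, Matrix.zero_mul, Matrix.mul_zero,
      neg_zero]
  smul_mem' := by
    intro c a ha
    simp only [Set.mem_setOf_eq] at *
    rw [Matrix.transpose_smul, smul_mul_assoc, ha, mul_smul_comm, smul_neg]

/-- The embedding `{1,…,4} → {1,…,8}`, `i ↦ i`. -/
def lo (i : Fin 4) : Fin 8 := ⟨i.val, by omega⟩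

/-- The embedding `{1,…,4} → {1,…,8}`, `i ↦ i + 4`. -/
def hi (i : Fin 4) : Fin 8 := ⟨i.val + 4, by omega⟩

/-- The elementary matrix `e_{k,l}`. -/
def elemMat (K : Type*) [Field K] (k l : Fin 8) : Matrix (Fin 8) (Fin 8) K :=
  Matrix.single k l 1

/-- `h_i = e_{i,i} − e_{i+4,i+4}`. -/
def hmat (K : Type*) [Field K] (i : Fin 4) : Matrix (Fin 8) (Fin 8) K :=
  elemMat K (lo i) (lo i) - elemMat K (hi i) (hi i)

/-- `b_{i,j} = e_{j,i} − e_{i+4,j+4}`. -/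
def bmat (K : Type*) [Field K] (i j : Fin 4) : Matrix (Fin 8) (Fin 8) K :=
  elemMat K (lo j) (lo i) - elemMat K (hi i) (hi j)

/-- `c_{i,j} = e_{j,i+4} − e_{i,j+4}`. -/
def cmat (K : Type*) [Field K] (i j : Fin 4) : Matrix (Fin 8) (Fin 8) K :=
  elemMat K (lo j) (hi i) - elemMat K (lo i) (hi j)

/-- `d_{i,j} = e_{i+4,j} − e_{j+4,i}`. -/
def dmat (K : Type*) [Field K] (i j : Fin 4) : Matrix (Fin 8) (Fin 8) K :=
  elemMat K (hi i) (lo j) - elemMat K (hi j) (lo i)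

/-- `EigOn t m s` says that the automorphism `t` of `L` sends the element of `L` whose
underlying matrix is `m` to `s • m`. -/
def EigOn {K : Type*} [Field K] (t : ↥(Lsub K) ≃ₗ[K] ↥(Lsub K))
    (m : Matrix (Fin 8) (Fin 8) K) (s : K) : Prop :=
  ∀ x : ↥(Lsub K), (x : Matrix (Fin 8) (Fin 8) K) = m →
    (t x : Matrix (Fin 8) (Fin 8) K) = s • m

namespace D4Aux

/-- swap the two halves of `Fin 8`. -/
def sw (k : Fin 8) : Fin 8 := if h : k.val < 4 then ⟨k.val + 4, by omega⟩ else ⟨k.val - 4, by omega⟩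

/-- integer weights -/
def dz : Fin 8 → ℤ := ![1, 4, 16, 64, -1, -4, -16, -64]

lemma sw_sw (k : Fin 8) : sw (sw k) = k := by revert k; decide

lemma sw_inj {a b : Fin 8} (h : sw a = sw b) : a = b := by
  have := congrArg sw h; rwa [sw_sw, sw_sw] at this

lemma dz_sw (k : Fin 8) : dz (sw k) = -dz k := by revert k; decide

lemma key : ∀ p q a b : Fin 8, p ≠ q → p ≠ sw q → dz a - dz b = dz p - dz q →
    ((a = p ∧ b = q) ∨ (a = sw q ∧ b = sw p)) := by decide

lemma sw_lo (i : Fin 4) : sw (lo i) = hi i := by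
  revert i; decide

lemma sw_hi (i : Fin 4) : sw (hi i) = lo i := by
  revert i; decide

lemma lo_ne_hi (i j : Fin 4) : lo i ≠ hi j := by
  simp [lo, hi, Fin.ext_iff]; omega

lemma lo_inj {i j : Fin 4} (h : lo i = lo j) : i = j := by
  simpa [lo, Fin.ext_iff] using h

lemma hi_inj {i j : Fin 4} (h : hi i = hi j) : i = j := by
  simpa [hi, Fin.ext_iff] using h

end D4Aux
namespace D4Aux
variable {K : Type*} [Field K]

lemma Cmat_apply (m l : Fin 8) : Cmat K m l = if m = sw l then 1 else 0 := by
  have : (m.val + 4 = l.val ∨ l.val + 4 = m.val) ↔ m = sw l := by revert m l; decide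
  simp only [Cmat, Matrix.of_apply, this]

lemma sum_sw (f : Fin 8 → K) (c : Fin 8) :
    (∑ m : Fin 8, if c = sw m then f m else 0) = f (sw c) := by
  rw [Finset.sum_eq_single (sw c)]
  · rw [if_pos (by rw [sw_sw])]
  · intro b _ hb
    rw [if_neg]
    intro h
    exact hb (by rw [h, sw_sw])
  · simp

lemma mem_iff {x : Matrix (Fin 8) (Fin 8) K} :
    x ∈ Lsub K ↔ ∀ a b : Fin 8, x a b = -x (sw b) (sw a) := by
  have expand : ∀ k l : Fin 8,
      ((x.transpose * Cmat K) k l = (-(Cmat K * x)) k l) ↔ (x (sw l) k = -x (sw k) l) := by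
    intro k l
    simp only [Matrix.mul_apply, Matrix.neg_apply, Matrix.transpose_apply, Cmat_apply,
      mul_ite, mul_one, mul_zero, ite_mul, one_mul, zero_mul,
      Finset.sum_ite_eq', Finset.mem_univ, if_true]
    rw [sum_sw (fun m => x m l) k]
  constructor
  · intro hx a b
    have h0 : x.transpose * Cmat K = -(Cmat K * x) := hx
    have := (expand b (sw a)).mp (by rw [h0])
    rwa [sw_sw] at this
  · intro hx
    show x.transpose * Cmat K = -(Cmat K * x)
    ext k l
    exact (expand k l).mpr (by rw [hx (sw l) k, sw_sw])

end D4Aux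
namespace D4Aux
variable {K : Type*} [Field K]

/-- generic root vector -/
def rootVec (K : Type*) [Field K] (p q : Fin 8) : Matrix (Fin 8) (Fin 8) K :=
  elemMat K p q - elemMat K (sw q) (sw p)

lemma rootVec_apply (p q a b : Fin 8) :
    rootVec K p q a b = (if a = p ∧ b = q then 1 else 0) -
      (if a = sw q ∧ b = sw p then 1 else 0) := by
  simp only [rootVec, elemMat, Matrix.sub_apply, Matrix.single]
  congr 1 <;> simp [eq_comm, and_comm, Matrix.of_apply]

lemma rootVec_mem (p q : Fin 8) : rootVec K p q ∈ Lsub K := by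
  rw [mem_iff]
  intro a b
  rw [rootVec_apply, rootVec_apply]
  have h1 : (sw b = p ∧ sw a = q) ↔ (a = sw q ∧ b = sw p) := by
    constructor
    · rintro ⟨h1, h2⟩; exact ⟨by rw [← h2, sw_sw], by rw [← h1, sw_sw]⟩
    · rintro ⟨h1, h2⟩; exact ⟨by rw [h2, sw_sw], by rw [h1, sw_sw]⟩
  have h2 : (sw b = sw q ∧ sw a = sw p) ↔ (a = p ∧ b = q) := by
    constructor
    · rintro ⟨h1, h2⟩; exact ⟨sw_inj h2, sw_inj h1⟩
    · rintro ⟨h1, h2⟩; exact ⟨by rw [h2], by rw [h1]⟩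
  rw [if_congr h1 rfl rfl, if_congr h2 rfl rfl]
  ring

lemma bmat_eq (i j : Fin 4) : bmat K i j = rootVec K (lo j) (lo i) := by
  rw [bmat, rootVec, sw_lo, sw_lo]

lemma cmat_eq (i j : Fin 4) : cmat K i j = rootVec K (lo j) (hi i) := by
  rw [cmat, rootVec, sw_lo, sw_hi]

lemma dmat_eq (i j : Fin 4) : dmat K i j = rootVec K (hi i) (lo j) := by
  rw [dmat, rootVec, sw_lo, sw_hi]

/-- commutator with a diagonal matrix, entrywise -/
lemma diag_comm_apply (d : Fin 8 → K) (M : Matrix (Fin 8) (Fin 8) K) (a b : Fin 8) :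
    (Matrix.diagonal d * M - M * Matrix.diagonal d) a b = (d a - d b) * M a b := by
  simp only [Matrix.sub_apply, Matrix.diagonal_mul, Matrix.mul_diagonal]
  ring

lemma diag_comm (d : Fin 8 → K) (M : Matrix (Fin 8) (Fin 8) K) (r : K)
    (h : ∀ a b, M a b ≠ 0 → d a - d b = r) :
    Matrix.diagonal d * M - M * Matrix.diagonal d = r • M := by
  ext a b
  rw [diag_comm_apply, Matrix.smul_apply, smul_eq_mul]
  by_cases hM : M a b = 0
  · rw [hM, mul_zero, mul_zero]
  · rw [h a b hM]

/-- the weight function in K -/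
def dK (K : Type*) [Field K] : Fin 8 → K := fun a => ((dz a : ℤ) : K)

lemma diagH_mem : Matrix.diagonal (dK K) ∈ Lsub K := by
  rw [mem_iff]
  intro a b
  by_cases h : a = b
  · subst h
    rw [Matrix.diagonal_apply_eq, Matrix.diagonal_apply_eq]
    simp [dK, dz_sw]
  · rw [Matrix.diagonal_apply_ne _ h, Matrix.diagonal_apply_ne, neg_zero]
    exact fun hc => h (sw_inj hc).symm

end D4Aux
namespace D4Aux
variable {K : Type*} [Field K] [CharZero K]

lemma dK_sw (k : Fin 8) : dK K (sw k) = -dK K k := by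
  simp [dK, dz_sw]

lemma eig (t : ↥(Lsub K) ≃ₗ[K] ↥(Lsub K))
    (htbracket : ∀ x y z : ↥(Lsub K),
      (z : Matrix (Fin 8) (Fin 8) K)
          = (x : Matrix (Fin 8) (Fin 8) K) * (y : Matrix (Fin 8) (Fin 8) K)
            - (y : Matrix (Fin 8) (Fin 8) K) * (x : Matrix (Fin 8) (Fin 8) K) →
      (t z : Matrix (Fin 8) (Fin 8) K)
          = (t x : Matrix (Fin 8) (Fin 8) K) * (t y : Matrix (Fin 8) (Fin 8) K)
            - (t y : Matrix (Fin 8) (Fin 8) K) * (t x : Matrix (Fin 8) (Fin 8) K))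
    (htdiag : ∀ h : ↥(Lsub K),
      (∀ i j : Fin 8, i ≠ j → (h : Matrix (Fin 8) (Fin 8) K) i j = 0) → t h = h)
    (p q : Fin 8) (hpq : p ≠ q) (hpq2 : p ≠ sw q) :
    ∃ s : K, s ≠ 0 ∧ EigOn t (rootVec K p q) s := by
  set H : ↥(Lsub K) := ⟨Matrix.diagonal (dK K), diagH_mem⟩ with hH
  have htH : t H = H := htdiag H (fun i j hij => Matrix.diagonal_apply_ne _ hij)
  set x₀ : ↥(Lsub K) := ⟨rootVec K p q, rootVec_mem p q⟩ with hx₀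
  set r : K := dK K p - dK K q with hr
  have hbr : Matrix.diagonal (dK K) * rootVec K p q
      - rootVec K p q * Matrix.diagonal (dK K) = r • rootVec K p q := by
    apply diag_comm
    intro a b hne
    rw [rootVec_apply] at hne
    by_cases h1 : a = p ∧ b = q
    · obtain ⟨rfl, rfl⟩ := h1; rfl
    by_cases h2 : a = sw q ∧ b = sw p
    · obtain ⟨rfl, rfl⟩ := h2
      rw [dK_sw, dK_sw, hr]; ring
    · rw [if_neg h1, if_neg h2, sub_zero] at hne; exact absurd rfl hne
  have happ := htbracket H x₀ (r • x₀) (by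
    rw [Submodule.coe_smul]
    exact hbr.symm)
  rw [htH] at happ
  set Y : Matrix (Fin 8) (Fin 8) K := ((t x₀ : ↥(Lsub K)) : Matrix (Fin 8) (Fin 8) K) with hYdef
  rw [map_smul, Submodule.coe_smul] at happ
  -- happ : r • Y = diagonal dK * Y - Y * diagonal dK
  have hent : ∀ a b, (dK K a - dK K b) * Y a b = r * Y a b := by
    intro a b
    have := congrFun (congrFun happ a) b
    rw [show ((⟨Matrix.diagonal (dK K), diagH_mem⟩ : ↥(Lsub K)) : Matrix (Fin 8) (Fin 8) K)
        = Matrix.diagonal (dK K) from rfl] at this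
    rw [← diag_comm_apply (dK K) Y a b, ← this, Matrix.smul_apply, smul_eq_mul]
  have hzero : ∀ a b, ¬((a = p ∧ b = q) ∨ (a = sw q ∧ b = sw p)) → Y a b = 0 := by
    intro a b hnot
    have hint : dz a - dz b - (dz p - dz q) ≠ 0 := by
      intro h
      exact hnot (key p q a b hpq hpq2 (by omega))
    have hcoef : (dK K a - dK K b) - r ≠ 0 := by
      have : (dK K a - dK K b) - r = ((dz a - dz b - (dz p - dz q) : ℤ) : K) := by
        simp only [dK, hr]; push_cast; ring
      rw [this]
      exact_mod_cast hint
    have h0 : ((dK K a - dK K b) - r) * Y a b = 0 := by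
      linear_combination hent a b
    rcases mul_eq_zero.mp h0 with h | h
    · exact absurd h hcoef
    · exact h
  have hYrel : Y p q = -Y (sw q) (sw p) := (mem_iff.mp (t x₀).2) p q
  have hY : Y = Y p q • rootVec K p q := by
    ext a b
    rw [Matrix.smul_apply, rootVec_apply, smul_eq_mul]
    by_cases h1 : a = p ∧ b = q
    · obtain ⟨rfl, rfl⟩ := h1
      rw [if_pos ⟨rfl, rfl⟩, if_neg, sub_zero, mul_one]
      rintro ⟨h, -⟩; exact hpq2 h
    by_cases h2 : a = sw q ∧ b = sw p
    · obtain ⟨rfl, rfl⟩ := h2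
      rw [if_neg, if_pos ⟨rfl, rfl⟩, zero_sub, mul_neg_one, hYrel, neg_neg]
      rintro ⟨h, -⟩; exact hpq2 h.symm
    · rw [hzero a b (by tauto), if_neg h1, if_neg h2, sub_zero, mul_zero]
  refine ⟨Y p q, ?_, ?_⟩
  · intro hs
    rw [hs, zero_smul] at hY
    have hx0 : x₀ = 0 := by
      apply t.injective
      rw [map_zero]
      exact Subtype.ext hY
    have := congrFun (congrFun (congrArg Subtype.val hx0) p) q
    rw [show ((x₀ : ↥(Lsub K)) : Matrix (Fin 8) (Fin 8) K) = rootVec K p q from rfl] at this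
    rw [rootVec_apply, if_pos ⟨rfl, rfl⟩, if_neg (fun h => hpq2 h.1), sub_zero] at this
    simp at this
  · intro x hx
    have hxx : x = x₀ := Subtype.ext (by rw [hx])
    rw [hxx]
    exact hY

end D4Aux
namespace D4Aux
variable {K : Type*} [Field K]

set_option linter.unusedSectionVars false

lemma bracket_mem {x y : Matrix (Fin 8) (Fin 8) K} (hx : x ∈ Lsub K) (hy : y ∈ Lsub K) :
    x * y - y * x ∈ Lsub K := by
  have hx' : x.transpose * Cmat K = -(Cmat K * x) := hx
  have hy' : y.transpose * Cmat K = -(Cmat K * y) := hy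
  have h1 : (x * y).transpose * Cmat K = Cmat K * (y * x) := by
    rw [Matrix.transpose_mul, Matrix.mul_assoc, hx', Matrix.mul_neg, ← Matrix.mul_assoc,
      hy', Matrix.neg_mul, neg_neg, Matrix.mul_assoc]
  have h2 : (y * x).transpose * Cmat K = Cmat K * (x * y) := by
    rw [Matrix.transpose_mul, Matrix.mul_assoc, hy', Matrix.mul_neg, ← Matrix.mul_assoc,
      hx', Matrix.neg_mul, neg_neg, Matrix.mul_assoc]
  show (x * y - y * x).transpose * Cmat K = -(Cmat K * (x * y - y * x))
  rw [Matrix.transpose_sub, Matrix.sub_mul, h1, h2, Matrix.mul_sub]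
  abel

lemma eigOn_mul {t : ↥(Lsub K) ≃ₗ[K] ↥(Lsub K)}
    (htbracket : ∀ x y z : ↥(Lsub K),
      (z : Matrix (Fin 8) (Fin 8) K)
          = (x : Matrix (Fin 8) (Fin 8) K) * (y : Matrix (Fin 8) (Fin 8) K)
            - (y : Matrix (Fin 8) (Fin 8) K) * (x : Matrix (Fin 8) (Fin 8) K) →
      (t z : Matrix (Fin 8) (Fin 8) K)
          = (t x : Matrix (Fin 8) (Fin 8) K) * (t y : Matrix (Fin 8) (Fin 8) K)
            - (t y : Matrix (Fin 8) (Fin 8) K) * (t x : Matrix (Fin 8) (Fin 8) K))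
    {mx my mz : Matrix (Fin 8) (Fin 8) K} {sx sy c : K}
    (hmx : mx ∈ Lsub K) (hmy : my ∈ Lsub K)
    (hx : EigOn t mx sx) (hy : EigOn t my sy)
    (hbr : mx * my - my * mx = c • mz) (hc : c ≠ 0) :
    EigOn t mz (sx * sy) := by
  intro z hz
  set X : ↥(Lsub K) := ⟨mx, hmx⟩ with hX
  set Z : ↥(Lsub K) := ⟨my, hmy⟩ with hZ
  have happ := htbracket X Z (c • z) (by rw [Submodule.coe_smul, hz, ← hbr])
  rw [hx X rfl, hy Z rfl, map_smul, Submodule.coe_smul] at happ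
  have hkey : c • ((t z : ↥(Lsub K)) : Matrix (Fin 8) (Fin 8) K)
      = c • ((sx * sy) • mz) := by
    rw [happ, smul_mul_smul_comm, smul_mul_smul_comm, mul_comm sy sx, ← smul_sub, hbr,
      smul_smul, smul_smul, show sx * sy * c = c * (sx * sy) by ring]
  have := smul_right_injective (Matrix (Fin 8) (Fin 8) K) hc hkey
  rw [this]

lemma elem_mul (p q u v : Fin 8) :
    elemMat K p q * elemMat K u v = if q = u then elemMat K p v else 0 := by
  by_cases h : q = u
  · subst h
    rw [if_pos rfl]
    have := Matrix.single_mul_single_same (c := (1 : K)) (i := p) (j := q) (k := v) (d := 1)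
    rw [one_mul] at this
    exact this
  · rw [if_neg h]
    exact Matrix.single_mul_single_of_ne (c := (1 : K)) (i := p) (j := q) (k := u) h 1

end D4Aux
namespace D4Aux
variable {K : Type*} [Field K]
set_option linter.unusedSectionVars false

lemma fv0 : ((0 : Fin 4)).val = 0 := rfl
lemma fv1 : ((1 : Fin 4)).val = 1 := rfl
lemma fv2 : ((2 : Fin 4)).val = 2 := rfl
lemma fv3 : ((3 : Fin 4)).val = 3 := rfl

lemma br_b20 : bmat K 1 0 * bmat K 2 1 - bmat K 2 1 * bmat K 1 0 = (1:K) • bmat K 2 0 := by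
  simp only [bmat, cmat, dmat, hmat, Matrix.sub_mul, Matrix.mul_sub, elem_mul,
    one_smul, neg_smul, neg_sub, lo, hi, fv0, fv1, fv2, fv3]
  norm_num [Fin.ext_iff]
  try abel

lemma br_b31 : bmat K 2 1 * bmat K 3 2 - bmat K 3 2 * bmat K 2 1 = (1:K) • bmat K 3 1 := by
  simp only [bmat, cmat, dmat, hmat, Matrix.sub_mul, Matrix.mul_sub, elem_mul,
    one_smul, neg_smul, neg_sub, lo, hi, fv0, fv1, fv2, fv3]
  norm_num [Fin.ext_iff]
  try abel

lemma br_b30 : bmat K 1 0 * bmat K 3 1 - bmat K 3 1 * bmat K 1 0 = (1:K) • bmat K 3 0 := by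
  simp only [bmat, cmat, dmat, hmat, Matrix.sub_mul, Matrix.mul_sub, elem_mul,
    one_smul, neg_smul, neg_sub, lo, hi, fv0, fv1, fv2, fv3]
  norm_num [Fin.ext_iff]
  try abel

lemma br_c31 : bmat K 2 1 * cmat K 2 3 - cmat K 2 3 * bmat K 2 1 = (-1:K) • cmat K 3 1 := by
  simp only [bmat, cmat, dmat, hmat, Matrix.sub_mul, Matrix.mul_sub, elem_mul,
    one_smul, neg_smul, neg_sub, lo, hi, fv0, fv1, fv2, fv3]
  norm_num [Fin.ext_iff]
  try abel

lemma br_c30 : bmat K 1 0 * cmat K 3 1 - cmat K 3 1 * bmat K 1 0 = (1:K) • cmat K 3 0 := by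
  simp only [bmat, cmat, dmat, hmat, Matrix.sub_mul, Matrix.mul_sub, elem_mul,
    one_smul, neg_smul, neg_sub, lo, hi, fv0, fv1, fv2, fv3]
  norm_num [Fin.ext_iff]
  try abel

lemma br_c12 : bmat K 3 1 * cmat K 2 3 - cmat K 2 3 * bmat K 3 1 = (-1:K) • cmat K 1 2 := by
  simp only [bmat, cmat, dmat, hmat, Matrix.sub_mul, Matrix.mul_sub, elem_mul,
    one_smul, neg_smul, neg_sub, lo, hi, fv0, fv1, fv2, fv3]
  norm_num [Fin.ext_iff]
  try abel

lemma br_c20 : bmat K 1 0 * cmat K 1 2 - cmat K 1 2 * bmat K 1 0 = (-1:K) • cmat K 2 0 := by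
  simp only [bmat, cmat, dmat, hmat, Matrix.sub_mul, Matrix.mul_sub, elem_mul,
    one_smul, neg_smul, neg_sub, lo, hi, fv0, fv1, fv2, fv3]
  norm_num [Fin.ext_iff]
  try abel

lemma br_c10 : bmat K 2 0 * cmat K 1 2 - cmat K 1 2 * bmat K 2 0 = (1:K) • cmat K 1 0 := by
  simp only [bmat, cmat, dmat, hmat, Matrix.sub_mul, Matrix.mul_sub, elem_mul,
    one_smul, neg_smul, neg_sub, lo, hi, fv0, fv1, fv2, fv3]
  norm_num [Fin.ext_iff]
  try abel

end D4Aux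
namespace D4Aux
variable {K : Type*} [Field K]
set_option linter.unusedSectionVars false

lemma elem_apply (p q a b : Fin 8) :
    elemMat K p q a b = if a = p ∧ b = q then 1 else 0 := by
  simp only [elemMat, Matrix.single, Matrix.of_apply]
  simp [eq_comm, and_comm]

@[simp] lemma lo_eq_lo {i j : Fin 4} : lo i = lo j ↔ i = j :=
  ⟨lo_inj, fun h => by rw [h]⟩

@[simp] lemma hi_eq_hi {i j : Fin 4} : hi i = hi j ↔ i = j :=
  ⟨hi_inj, fun h => by rw [h]⟩

@[simp] lemma lo_eq_hi {i j : Fin 4} : lo i = hi j ↔ False :=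
  ⟨fun h => lo_ne_hi i j h, False.elim⟩

@[simp] lemma hi_eq_lo {i j : Fin 4} : hi i = lo j ↔ False :=
  ⟨fun h => lo_ne_hi j i h.symm, False.elim⟩

lemma hmat_eq (i : Fin 4) : hmat K i = rootVec K (lo i) (lo i) := by
  rw [hmat, rootVec, sw_lo]

lemma hmat_mem (i : Fin 4) : hmat K i ∈ Lsub K := by rw [hmat_eq]; exact rootVec_mem _ _
lemma bmat_mem (i j : Fin 4) : bmat K i j ∈ Lsub K := by rw [bmat_eq]; exact rootVec_mem _ _
lemma cmat_mem (i j : Fin 4) : cmat K i j ∈ Lsub K := by rw [cmat_eq]; exact rootVec_mem _ _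
lemma dmat_mem (i j : Fin 4) : dmat K i j ∈ Lsub K := by rw [dmat_eq]; exact rootVec_mem _ _

lemma hmat_offdiag (i : Fin 4) (a b : Fin 8) (hab : a ≠ b) : hmat K i a b = 0 := by
  rw [hmat, Matrix.sub_apply, elem_apply, elem_apply, if_neg, if_neg, sub_zero]
  · rintro ⟨rfl, rfl⟩; exact hab rfl
  · rintro ⟨rfl, rfl⟩; exact hab rfl

lemma hmat_lo (i j : Fin 4) : hmat K i (lo j) (lo j) = if j = i then 1 else 0 := by
  rw [hmat, Matrix.sub_apply, elem_apply, elem_apply]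
  simp

lemma hb_ne (i j : Fin 4) (hij : i ≠ j) : hmat K j - hmat K i ≠ (0 : Matrix (Fin 8) (Fin 8) K) := by
  intro h
  have h2 := congrFun (congrFun h (lo j)) (lo j)
  rw [Matrix.sub_apply, hmat_lo, hmat_lo, Matrix.zero_apply, if_pos rfl, if_neg hij.symm,
    sub_zero] at h2
  exact one_ne_zero h2

lemma hc_ne [CharZero K] (i j : Fin 4) : hmat K i + hmat K j ≠ (0 : Matrix (Fin 8) (Fin 8) K) := by
  intro h
  have h2 := congrFun (congrFun h (lo j)) (lo j)
  rw [Matrix.add_apply, hmat_lo, hmat_lo, Matrix.zero_apply, if_pos rfl] at h2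
  by_cases hji : j = i
  · rw [if_pos hji] at h2; norm_num at h2
  · rw [if_neg hji, zero_add] at h2; exact one_ne_zero h2

lemma br_bb (i j : Fin 4) (hij : i ≠ j) :
    bmat K i j * bmat K j i - bmat K j i * bmat K i j = hmat K j - hmat K i := by
  simp only [bmat, hmat, Matrix.sub_mul, Matrix.mul_sub, elem_mul, lo_eq_lo, hi_eq_hi,
    lo_eq_hi, hi_eq_lo, if_true, if_false, eq_self_iff_true, hij, Ne.symm hij, ite_false,
    ite_true]
  abel

lemma br_cd (i j : Fin 4) (hij : i ≠ j) :
    cmat K i j * dmat K i j - dmat K i j * cmat K i j = hmat K i + hmat K j := by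
  simp only [cmat, dmat, hmat, Matrix.sub_mul, Matrix.mul_sub, elem_mul, lo_eq_lo, hi_eq_hi,
    lo_eq_hi, hi_eq_lo, if_true, if_false, eq_self_iff_true, hij, Ne.symm hij, ite_false,
    ite_true]
  abel

lemma scalar_inv {t : ↥(Lsub K) ≃ₗ[K] ↥(Lsub K)}
    (htbracket : ∀ x y z : ↥(Lsub K),
      (z : Matrix (Fin 8) (Fin 8) K)
          = (x : Matrix (Fin 8) (Fin 8) K) * (y : Matrix (Fin 8) (Fin 8) K)
            - (y : Matrix (Fin 8) (Fin 8) K) * (x : Matrix (Fin 8) (Fin 8) K) →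
      (t z : Matrix (Fin 8) (Fin 8) K)
          = (t x : Matrix (Fin 8) (Fin 8) K) * (t y : Matrix (Fin 8) (Fin 8) K)
            - (t y : Matrix (Fin 8) (Fin 8) K) * (t x : Matrix (Fin 8) (Fin 8) K))
    (htdiag : ∀ h : ↥(Lsub K),
      (∀ i j : Fin 8, i ≠ j → (h : Matrix (Fin 8) (Fin 8) K) i j = 0) → t h = h)
    {m m' hm : Matrix (Fin 8) (Fin 8) K} {lam mu : K}
    (hmem : m ∈ Lsub K) (hmem' : m' ∈ Lsub K) (hmm : hm ∈ Lsub K)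
    (hdiag : ∀ a b : Fin 8, a ≠ b → hm a b = 0) (hne : hm ≠ 0)
    (hbr : m * m' - m' * m = hm)
    (hE : EigOn t m lam) (hE' : EigOn t m' mu) : mu = lam⁻¹ := by
  set X : ↥(Lsub K) := ⟨m, hmem⟩ with hX
  set Y : ↥(Lsub K) := ⟨m', hmem'⟩ with hY
  set Z : ↥(Lsub K) := ⟨hm, hmm⟩ with hZ
  have happ := htbracket X Y Z hbr.symm
  rw [hE X rfl, hE' Y rfl, htdiag Z hdiag] at happ
  have hsc : hm = (lam * mu) • hm := by
    calc hm = (Z : Matrix (Fin 8) (Fin 8) K) := rfl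
    _ = (lam • m) * (mu • m') - (mu • m') * (lam • m) := happ
    _ = (lam * mu) • (m * m' - m' * m) := by
        rw [smul_mul_smul_comm, smul_mul_smul_comm, mul_comm mu lam, ← smul_sub]
    _ = (lam * mu) • hm := by rw [hbr]
  have h1 : (1 - lam * mu) • hm = 0 := by
    rw [sub_smul, one_smul, ← hsc, sub_self]
  rcases smul_eq_zero.mp h1 with h | h
  · have hlm : lam * mu = 1 := (sub_eq_zero.mp h).symm
    have hlam : lam ≠ 0 := left_ne_zero_of_mul_eq_one hlm
    rw [← mul_one lam⁻¹, ← hlm, inv_mul_cancel_left₀ hlam]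
  · exact absurd h hne

end D4Aux

open D4Aux

/-- Any automorphism of `L` fixing the Cartan subalgebra of diagonal matrices pointwise
acts diagonally on the root vectors with eigenvalues
`α, β, γ, δ, αβ, αβγ, βγ, αβδ, βδ, αβ²γδ, αβγδ, βγδ` on the positive root vectors and
inverse eigenvalues on the opposite root vectors. -/
theorem torus_eigenvalue_pattern (K : Type*) [Field K] [CharZero K]
    (t : ↥(Lsub K) ≃ₗ[K] ↥(Lsub K))
    (htbracket : ∀ x y z : ↥(Lsub K),
      (z : Matrix (Fin 8) (Fin 8) K)
          = (x : Matrix (Fin 8) (Fin 8) K) * (y : Matrix (Fin 8) (Fin 8) K)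
            - (y : Matrix (Fin 8) (Fin 8) K) * (x : Matrix (Fin 8) (Fin 8) K) →
      (t z : Matrix (Fin 8) (Fin 8) K)
          = (t x : Matrix (Fin 8) (Fin 8) K) * (t y : Matrix (Fin 8) (Fin 8) K)
            - (t y : Matrix (Fin 8) (Fin 8) K) * (t x : Matrix (Fin 8) (Fin 8) K))
    (htdiag : ∀ h : ↥(Lsub K),
      (∀ i j : Fin 8, i ≠ j → (h : Matrix (Fin 8) (Fin 8) K) i j = 0) → t h = h) :
    ∃ α β γ δ : K, α ≠ 0 ∧ β ≠ 0 ∧ γ ≠ 0 ∧ δ ≠ 0 ∧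
      EigOn t (bmat K 1 0) α ∧
      EigOn t (bmat K 2 1) β ∧
      EigOn t (bmat K 3 2) γ ∧
      EigOn t (cmat K 2 3) δ ∧
      EigOn t (bmat K 2 0) (α * β) ∧
      EigOn t (bmat K 3 0) (α * β * γ) ∧
      EigOn t (bmat K 3 1) (β * γ) ∧
      EigOn t (cmat K 3 0) (α * β * δ) ∧
      EigOn t (cmat K 3 1) (β * δ) ∧
      EigOn t (cmat K 1 0) (α * β ^ 2 * γ * δ) ∧
      EigOn t (cmat K 2 0) (α * β * γ * δ) ∧
      EigOn t (cmat K 1 2) (β * γ * δ) ∧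
      (∀ i j : Fin 4, i ≠ j → ∀ lam : K,
        (EigOn t (bmat K i j) lam → EigOn t (bmat K j i) lam⁻¹) ∧
        (EigOn t (cmat K i j) lam → EigOn t (dmat K i j) lam⁻¹)) := by
  classical
  obtain ⟨α, hα0, hαE⟩ := eig t htbracket htdiag (lo 0) (lo 1) (by decide) (by decide)
  obtain ⟨β, hβ0, hβE⟩ := eig t htbracket htdiag (lo 1) (lo 2) (by decide) (by decide)
  obtain ⟨γ, hγ0, hγE⟩ := eig t htbracket htdiag (lo 2) (lo 3) (by decide) (by decide)
  obtain ⟨δ, hδ0, hδE⟩ := eig t htbracket htdiag (lo 3) (hi 2) (by decide) (by decide)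
  rw [← bmat_eq] at hαE hβE hγE
  rw [← cmat_eq] at hδE
  have hone : (1 : K) ≠ 0 := one_ne_zero
  have hnegone : (-1 : K) ≠ 0 := by norm_num
  have hαβ : EigOn t (bmat K 2 0) (α * β) :=
    eigOn_mul htbracket (bmat_mem 1 0) (bmat_mem 2 1) hαE hβE br_b20 hone
  have hβγ : EigOn t (bmat K 3 1) (β * γ) :=
    eigOn_mul htbracket (bmat_mem 2 1) (bmat_mem 3 2) hβE hγE br_b31 hone
  have hαβγ : EigOn t (bmat K 3 0) (α * β * γ) := by
    have := eigOn_mul htbracket (bmat_mem 1 0) (bmat_mem 3 1) hαE hβγ br_b30 hone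
    rwa [← mul_assoc] at this
  have hβδ : EigOn t (cmat K 3 1) (β * δ) :=
    eigOn_mul htbracket (bmat_mem 2 1) (cmat_mem 2 3) hβE hδE br_c31 hnegone
  have hαβδ : EigOn t (cmat K 3 0) (α * β * δ) := by
    have := eigOn_mul htbracket (bmat_mem 1 0) (cmat_mem 3 1) hαE hβδ br_c30 hone
    rwa [← mul_assoc] at this
  have hβγδ : EigOn t (cmat K 1 2) (β * γ * δ) :=
    eigOn_mul htbracket (bmat_mem 3 1) (cmat_mem 2 3) hβγ hδE br_c12 hnegone
  have hαβγδ : EigOn t (cmat K 2 0) (α * β * γ * δ) := by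
    have := eigOn_mul htbracket (bmat_mem 1 0) (cmat_mem 1 2) hαE hβγδ br_c20 hnegone
    rwa [show α * (β * γ * δ) = α * β * γ * δ by ring] at this
  have hc10 : EigOn t (cmat K 1 0) (α * β ^ 2 * γ * δ) := by
    have := eigOn_mul htbracket (bmat_mem 2 0) (cmat_mem 1 2) hαβ hβγδ br_c10 hone
    rwa [show α * β * (β * γ * δ) = α * β ^ 2 * γ * δ by ring] at this
  refine ⟨α, β, γ, δ, hα0, hβ0, hγ0, hδ0, hαE, hβE, hγE, hδE, hαβ, hαβγ, hβγ, hαβδ, hβδ,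
    hc10, hαβγδ, hβγδ, ?_⟩
  intro i j hij lam
  constructor
  · intro hb
    obtain ⟨mu, hmu0, hmuE⟩ := eig t htbracket htdiag (lo i) (lo j)
      (fun h => hij (lo_inj h)) (by rw [sw_lo]; exact lo_ne_hi i j)
    rw [← bmat_eq] at hmuE
    have hmm : hmat K j - hmat K i ∈ Lsub K :=
      Submodule.sub_mem _ (hmat_mem j) (hmat_mem i)
    have heq : mu = lam⁻¹ := scalar_inv htbracket htdiag (bmat_mem i j) (bmat_mem j i) hmm
      (fun a b hab => by
        rw [Matrix.sub_apply, hmat_offdiag j a b hab, hmat_offdiag i a b hab, sub_zero])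
      (hb_ne i j hij) (br_bb i j hij) hb hmuE
    rwa [heq] at hmuE
  · intro hc
    obtain ⟨mu, hmu0, hmuE⟩ := eig t htbracket htdiag (hi i) (lo j)
      (fun h => lo_ne_hi j i h.symm) (by rw [sw_lo]; exact fun h => hij (hi_inj h))
    rw [← dmat_eq] at hmuE
    have hmm : hmat K i + hmat K j ∈ Lsub K :=
      Submodule.add_mem _ (hmat_mem i) (hmat_mem j)
    have heq : mu = lam⁻¹ := scalar_inv htbracket htdiag (cmat_mem i j) (dmat_mem i j) hmm
      (fun a b hab => by
        rw [Matrix.add_apply, hmat_offdiag j a b hab, hmat_offdiag i a b hab, add_zero])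
      (hc_ne i j) (br_cd i j hij) hc hmuE
    rwa [heq] at hmuE
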